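/- arXiv:0909.1006 — 4 statements merged into one kernel-verified Lean document; each statement's English description precedes it below -/
import Mathlib

section
/- Let G be a second countable locally compact topological group with a left Haar measure μ_G, let U be a compact subgroup of G, and let π be a strongly continuous unitary representation of G on a complex Hilbert space H. Let f : G → ℝ be a continuous function with compact support such that f ≥ 0, ∫_G f dμ_G = 1, and f(u g u') = f(g) for all u, u' ∈ U and g ∈ G. Define π(f)ξ = ∫_G f(x) • (π(x)ξ) dμ_G(x). If π has almost invariant vectors, then there exists a sequence (η_n) of vectors in H^U = {ξ ∈ H : π(u)ξ = ξ for all u ∈ U} with ‖η_n‖ ≥ 1/2 for all sufficiently large n and lim_n ‖π(f)η_n − η_n‖ = 0; in particular, 1 belongs to the spectrum of the restriction of π(f) to H^U. -/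
open MeasureTheory Filter

/-- A unitary representation has almost invariant vectors if for every compact subset `Q`
and every `ε > 0` there is a unit vector moved by less than `ε` by every element of `Q`. -/
def HasAlmostInvariantVectors {G H : Type*} [Group G] [TopologicalSpace G]
    [NormedAddCommGroup H] [InnerProductSpace ℂ H]
    (π : G →* (H →L[ℂ] H)) : Prop :=
  ∀ Q : Set G, IsCompact Q → ∀ ε : ℝ, 0 < ε →
    ∃ ξ : H, ‖ξ‖ = 1 ∧ ∀ x ∈ Q, ‖π x ξ - ξ‖ < ε

/-- The subspace `H^U` of vectors fixed by every element of the subgroup `U`. -/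
def invariantSubmodule {G H : Type*} [Group G]
    [NormedAddCommGroup H] [InnerProductSpace ℂ H]
    (π : G →* (H →L[ℂ] H)) (U : Subgroup G) : Submodule ℂ H where
  carrier := {ξ : H | ∀ u ∈ U, π u ξ = ξ}
  add_mem' := by
    intro a b ha hb u hu
    simp [map_add, ha u hu, hb u hu]
  zero_mem' := by intro u hu; simp
  smul_mem' := by
    intro c x hx u hu
    simp [_root_.map_smul, hx u hu]

theorem stmt2 {G H : Type*} [Group G] [TopologicalSpace G] [IsTopologicalGroup G]
    [LocallyCompactSpace G] [SecondCountableTopology G]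
    [MeasurableSpace G] [BorelSpace G]
    (μG : Measure G) [μG.IsHaarMeasure]
    [NormedAddCommGroup H] [InnerProductSpace ℂ H] [CompleteSpace H]
    (π : G →* (H →L[ℂ] H))
    (hπ_unitary : ∀ (g : G) (ξ : H), ‖π g ξ‖ = ‖ξ‖)
    (hπ_cont : ∀ ξ : H, Continuous fun g : G => π g ξ)
    (U : Subgroup G) (hU : IsCompact (U : Set G))
    (f : G → ℝ) (hf_cont : Continuous f) (hf_supp : HasCompactSupport f)
    (hf_nonneg : ∀ x, 0 ≤ f x) (hf_int : ∫ x, f x ∂μG = 1)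
    (hf_biinv : ∀ u ∈ U, ∀ u' ∈ U, ∀ g : G, f (u * g * u') = f g)
    (T : H →L[ℂ] H)
    (hT : ∀ ξ : H, T ξ = ∫ x, f x • (π x ξ) ∂μG)
    (halmost : HasAlmostInvariantVectors π) :
    (∃ η : ℕ → H, (∀ n, η n ∈ invariantSubmodule π U) ∧
        (∃ N : ℕ, ∀ n ≥ N, (1 : ℝ) / 2 ≤ ‖η n‖) ∧
        Tendsto (fun n => ‖T (η n) - η n‖) atTop (nhds 0)) ∧
      ∃ hinv : ∀ ξ : invariantSubmodule π U,
          T ((invariantSubmodule π U).subtypeL ξ) ∈ invariantSubmodule π U,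
        (1 : ℂ) ∈ spectrum ℂ
          ((T.comp (invariantSubmodule π U).subtypeL).codRestrict
            (invariantSubmodule π U) hinv) := by
  classical
  -- Basic integrability facts
  have hf_integrable : Integrable f μG := hf_cont.integrable_of_hasCompactSupport hf_supp
  have hcont : ∀ ξ : H, Continuous fun x : G => f x • π x ξ :=
    fun ξ => hf_cont.smul (hπ_cont ξ)
  have hsupp : ∀ ξ : H, HasCompactSupport fun x : G => f x • π x ξ :=
    fun ξ => hf_supp.smul_right
  have hint : ∀ ξ : H, Integrable (fun x : G => f x • π x ξ) μG :=
    fun ξ => (hcont ξ).integrable_of_hasCompactSupport (hsupp ξ)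
  -- f is left U-invariant
  have hf_left : ∀ u ∈ U, ∀ g : G, f (u * g) = f g := by
    intro u hu g
    have := hf_biinv u hu 1 (one_mem U) g
    simpa using this
  -- T ξ lies in the invariant submodule
  have hT_mem : ∀ ξ : H, T ξ ∈ invariantSubmodule π U := by
    intro ξ u hu
    rw [hT]
    rw [← ContinuousLinearMap.integral_comp_comm (π u) (hint ξ)]
    have h1 : ∀ x : G, π u (f x • π x ξ) = f x • π (u * x) ξ := by
      intro x
      rw [(π u).map_smul_of_tower, map_mul]
      rfl
    simp_rw [h1]
    calc ∫ x, f x • π (u * x) ξ ∂μG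
        = ∫ x, f (u⁻¹ * (u * x)) • π (u * x) ξ ∂μG := by
          congr 1; ext x
          rw [inv_mul_cancel_left]
      _ = ∫ x, f (u⁻¹ * x) • π x ξ ∂μG :=
          integral_mul_left_eq_self (fun y => f (u⁻¹ * y) • π y ξ) u
      _ = ∫ x, f x • π x ξ ∂μG := by
          congr 1; ext x
          rw [hf_left u⁻¹ (inv_mem hu) x]
  -- T is a contraction
  have hT_norm : ∀ ξ : H, ‖T ξ‖ ≤ ‖ξ‖ := by
    intro ξ
    rw [hT]
    calc ‖∫ x, f x • π x ξ ∂μG‖ ≤ ∫ x, ‖f x • π x ξ‖ ∂μG :=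
          norm_integral_le_integral_norm _
      _ = ∫ x, f x * ‖ξ‖ ∂μG := by
          congr 1; ext x
          rw [norm_smul, hπ_unitary, Real.norm_eq_abs, abs_of_nonneg (hf_nonneg x)]
      _ = (∫ x, f x ∂μG) * ‖ξ‖ := by rw [integral_mul_const]
      _ = ‖ξ‖ := by rw [hf_int, one_mul]
  -- T ξ is close to ξ for almost invariant ξ
  have hT_close : ∀ (ε : ℝ) (ξ : H), (∀ x ∈ tsupport f, ‖π x ξ - ξ‖ ≤ ε) →
      ‖T ξ - ξ‖ ≤ ε := by
    intro ε ξ hξ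
    have hε : 0 ≤ ε := by
      rcases eq_or_ne (tsupport f) ∅ with h | h
      · by_contra hlt
        push_neg at hlt
        have : f = fun _ => 0 := by
          ext x
          exact image_eq_zero_of_notMem_tsupport (by simp [h])
        rw [this] at hf_int
        simp at hf_int
      · obtain ⟨x, hx⟩ := Set.nonempty_iff_ne_empty.mpr h
        exact le_trans (norm_nonneg _) (hξ x hx)
    have key : T ξ - ξ = ∫ x, f x • (π x ξ - ξ) ∂μG := by
      calc T ξ - ξ = (∫ x, f x • π x ξ ∂μG) - (∫ x, f x ∂μG) • ξ := by
            rw [hT, hf_int, one_smul]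
        _ = (∫ x, f x • π x ξ ∂μG) - ∫ x, f x • ξ ∂μG := by rw [integral_smul_const]
        _ = ∫ x, (f x • π x ξ - f x • ξ) ∂μG :=
            (integral_sub (hint ξ) (hf_integrable.smul_const ξ)).symm
        _ = ∫ x, f x • (π x ξ - ξ) ∂μG := by simp_rw [smul_sub]
    rw [key]
    have hint2 : Integrable (fun x : G => f x • (π x ξ - ξ)) μG := by
      apply Continuous.integrable_of_hasCompactSupport
      · exact hf_cont.smul ((hπ_cont ξ).sub continuous_const)
      · exact hf_supp.smul_right
    calc ‖∫ x, f x • (π x ξ - ξ) ∂μG‖ ≤ ∫ x, ‖f x • (π x ξ - ξ)‖ ∂μG :=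
          norm_integral_le_integral_norm _
      _ ≤ ∫ x, f x * ε ∂μG := by
          apply integral_mono hint2.norm (hf_integrable.mul_const ε)
          intro x
          show ‖f x • (π x ξ - ξ)‖ ≤ f x * ε
          rw [norm_smul, Real.norm_eq_abs, abs_of_nonneg (hf_nonneg x)]
          by_cases hx : x ∈ tsupport f
          · exact mul_le_mul_of_nonneg_left (hξ x hx) (hf_nonneg x)
          · rw [image_eq_zero_of_notMem_tsupport hx]
            simp
      _ = ε := by rw [integral_mul_const, hf_int, one_mul]
  -- Choose almost invariant vectors
  have hchoice : ∀ n : ℕ, ∃ ξ : H, ‖ξ‖ = 1 ∧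
      ∀ x ∈ tsupport f, ‖π x ξ - ξ‖ < 1 / (n + 1) := by
    intro n
    exact halmost (tsupport f) hf_supp (1 / (n + 1)) (by positivity)
  choose ξ hξ1 hξ2 using hchoice
  set η : ℕ → H := fun n => T (ξ n) with hη
  have hclose : ∀ n : ℕ, ‖T (ξ n) - ξ n‖ ≤ 1 / (n + 1) := by
    intro n
    exact hT_close _ _ (fun x hx => le_of_lt (hξ2 n x hx))
  have hηnorm : ∀ n : ℕ, 1 - 1 / (n + 1 : ℝ) ≤ ‖η n‖ := by
    intro n
    show 1 - 1 / (n + 1 : ℝ) ≤ ‖T (ξ n)‖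
    have h1 := norm_sub_norm_le (ξ n) (T (ξ n))
    rw [norm_sub_rev, hξ1 n] at h1
    have h2 := hclose n
    linarith
  have hηclose : ∀ n : ℕ, ‖T (η n) - η n‖ ≤ 1 / (n + 1) := by
    intro n
    have : T (η n) - η n = T (T (ξ n) - ξ n) := by
      rw [map_sub]
    rw [this]
    exact le_trans (hT_norm _) (hclose n)
  have htendsto : Tendsto (fun n : ℕ => ‖T (η n) - η n‖) atTop (nhds 0) :=
    squeeze_zero (fun n => norm_nonneg _) hηclose tendsto_one_div_add_atTop_nhds_zero_nat
  have hηmem : ∀ n, η n ∈ invariantSubmodule π U := fun n => hT_mem (ξ n)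
  have hηbig : ∀ n ≥ 1, (1 : ℝ) / 2 ≤ ‖η n‖ := by
    intro n hn
    have h1 : 1 / (n + 1 : ℝ) ≤ 1 / 2 := by
      apply div_le_div_of_nonneg_left (by norm_num) (by norm_num)
      have : (1 : ℝ) ≤ n := by exact_mod_cast hn
      linarith
    linarith [hηnorm n]
  refine ⟨⟨η, hηmem, ⟨1, hηbig⟩, htendsto⟩, fun ζ => hT_mem _, ?_⟩
  -- Spectrum part
  set p := invariantSubmodule π U
  set S := (T.comp p.subtypeL).codRestrict p (fun ζ => hT_mem _) with hS
  by_contra hspec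
  rw [spectrum.notMem_iff] at hspec
  rw [map_one] at hspec
  obtain ⟨v, hv⟩ := hspec
  set R := (↑v⁻¹ : p →L[ℂ] p) with hR
  have hRid : ∀ ζ : p, R ((1 - S) ζ) = ζ := by
    intro ζ
    have : (↑v⁻¹ * ↑v : p →L[ℂ] p) = 1 := v.inv_mul
    rw [hv] at this
    calc R ((1 - S) ζ) = ((↑v⁻¹ : p →L[ℂ] p) * (1 - S)) ζ := rfl
      _ = (1 : p →L[ℂ] p) ζ := by rw [this]
      _ = ζ := rfl
  -- Derive a contradiction
  have hRnorm : ∀ ζ : p, ‖ζ‖ ≤ ‖R‖ * ‖ζ - S ζ‖ := by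
    intro ζ
    calc ‖ζ‖ = ‖R ((1 - S) ζ)‖ := by rw [hRid]
      _ ≤ ‖R‖ * ‖(1 - S) ζ‖ := R.le_opNorm _
      _ = ‖R‖ * ‖ζ - S ζ‖ := by
          have h : (1 - S) ζ = ζ - S ζ := by
            rw [ContinuousLinearMap.sub_apply, ContinuousLinearMap.one_apply]
          rw [h]
  have hRpos : (0 : ℝ) < ‖R‖ + 1 := by positivity
  have hev : ∀ᶠ n in atTop, ‖T (η n) - η n‖ < 1 / (2 * (‖R‖ + 1)) := by
    have := htendsto
    rw [NormedAddCommGroup.tendsto_nhds_zero] at this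
    have h := this (1 / (2 * (‖R‖ + 1))) (by positivity)
    filter_upwards [h] with n hn
    simpa using hn
  obtain ⟨n, hn1, hn2⟩ := ((hev.and (eventually_ge_atTop 1)).exists : ∃ n,
    ‖T (η n) - η n‖ < 1 / (2 * (‖R‖ + 1)) ∧ n ≥ 1)
  set ζ : p := ⟨η n, hηmem n⟩ with hζ
  have hSζ : (S ζ : H) = T (η n) := rfl
  have hζnorm : ‖ζ‖ = ‖η n‖ := rfl
  have hζsub : ‖ζ - S ζ‖ = ‖T (η n) - η n‖ := by
    have : ((ζ - S ζ : p) : H) = η n - T (η n) := by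
      simp [hSζ]
      rfl
    rw [show ‖ζ - S ζ‖ = ‖((ζ - S ζ : p) : H)‖ from rfl, this, norm_sub_rev]
  have h1 : (1 : ℝ) / 2 ≤ ‖ζ‖ := by rw [hζnorm]; exact hηbig n hn2
  have h2 : ‖ζ‖ ≤ ‖R‖ * ‖T (η n) - η n‖ := by
    rw [← hζsub]; exact hRnorm ζ
  have h3 : ‖R‖ * ‖T (η n) - η n‖ < (‖R‖ + 1) * (1 / (2 * (‖R‖ + 1))) := by
    apply mul_lt_mul' (by linarith [norm_nonneg R]) hn1 (norm_nonneg _) hRpos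
  have h4 : (‖R‖ + 1) * (1 / (2 * (‖R‖ + 1))) = 1 / 2 := by
    field_simp
  linarith
end

section
/- For every integer k ≥ 3 there exist functions a, b, μ : ℕ → ℝ (interpreted as edge indices a(n) from vertex n to n+1 and b(n) from vertex n+1 to n on the infinite path with vertex set ℕ, and vertex measure μ) such that: a(n) > 0, b(n) > 0 and μ(n) > 0 for all n; a(n)·μ(n) = b(n)·μ(n+1) for all n (so the edge measure w(n) = a(n)·μ(n) is symmetric); a(0) = k and b(n) + a(n+1) = k for all n (so every vertex has in-degree k); ∑_{n=0}^∞ μ(n) < ∞; and for every ε > 0 there exists a finite nonempty subset S ⊆ ℕ with μ(S) ≤ (∑_{n} μ(n))/2 and w(∂S) < ε·μ(S), where μ(S) = ∑_{n ∈ S} μ(n) and w(∂S) = ∑ w(n) over all n such that exactly one of n, n+1 lies in S. In other words, there exists a k-regular diagram of finite volume which is not an expander diagram. -/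
noncomputable def Wfn (n : ℕ) : ℝ := 1 / (((n:ℝ)+1) * ((n:ℝ)+2))

lemma Wfn_pos (n : ℕ) : 0 < Wfn n := by unfold Wfn; positivity

lemma Wfn_eq (n : ℕ) : Wfn n = 1/((n:ℝ)+1) - 1/((n:ℝ)+2) := by
  unfold Wfn
  have h1 : ((n:ℝ)+1) ≠ 0 := by positivity
  have h2 : ((n:ℝ)+2) ≠ 0 := by positivity
  field_simp
  ring

lemma sum_range_Wfn (N : ℕ) : ∑ n ∈ Finset.range N, Wfn n = 1 - 1/((N:ℝ)+1) := by
  have h := Finset.sum_range_sub' (f := fun n : ℕ => 1/((n:ℝ)+1)) N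
  rw [show (∑ n ∈ Finset.range N, Wfn n) = ∑ i ∈ Finset.range N,
      ((fun n : ℕ => 1/((n:ℝ)+1)) i - (fun n : ℕ => 1/((n:ℝ)+1)) (i+1)) from
    Finset.sum_congr rfl (fun i _ => by push_cast [Wfn_eq i]; ring), h]
  norm_num

lemma summable_Wfn : Summable Wfn := by
  apply summable_of_sum_range_le (c := 1) (fun n => (Wfn_pos n).le)
  intro n
  rw [sum_range_Wfn]
  have : 0 < 1/((n:ℝ)+1) := by positivity
  linarith

lemma hasSum_Wfn : HasSum Wfn 1 := by
  rw [hasSum_iff_tendsto_nat_of_nonneg (fun n => (Wfn_pos n).le)]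
  simp only [sum_range_Wfn]
  have h : Filter.Tendsto (fun N : ℕ => 1/((N:ℝ)+1)) Filter.atTop (nhds 0) :=
    tendsto_one_div_add_atTop_nhds_zero_nat
  have := (tendsto_const_nhds (x := (1:ℝ)) (f := Filter.atTop (α := ℕ))).sub h
  simpa using this

lemma tsum_Wfn : ∑' n, Wfn n = 1 := hasSum_Wfn.tsum_eq

/-- sum of Wfn over Icc m M -/
lemma sum_Icc_Wfn (m M : ℕ) (h : m ≤ M + 1) :
    ∑ n ∈ Finset.Icc m M, Wfn n = 1/((m:ℝ)+1) - 1/((M:ℝ)+2) := by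
  rw [← Finset.Ico_add_one_right_eq_Icc, Finset.sum_Ico_eq_sub _ h, sum_range_Wfn, sum_range_Wfn]
  push_cast
  ring

theorem stmt5 (k : ℕ) (hk : 3 ≤ k) :
    ∃ a b μ : ℕ → ℝ,
      (∀ n, 0 < a n) ∧ (∀ n, 0 < b n) ∧ (∀ n, 0 < μ n) ∧
      (∀ n, a n * μ n = b n * μ (n + 1)) ∧
      a 0 = k ∧ (∀ n, b n + a (n + 1) = k) ∧
      Summable μ ∧
      ∀ ε : ℝ, 0 < ε → ∃ S : Finset ℕ, S.Nonempty ∧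
        (∑ n ∈ S, μ n) ≤ (∑' n, μ n) / 2 ∧
        (∑' n : ℕ, if (n ∈ S ∧ n + 1 ∉ S) ∨ (n ∉ S ∧ n + 1 ∈ S) then a n * μ n else 0)
          < ε * ∑ n ∈ S, μ n := by
  have hk0 : (0:ℝ) < k := by
    have : (3:ℝ) ≤ k := by exact_mod_cast hk
    linarith
  have hkne : (k:ℝ) ≠ 0 := ne_of_gt hk0
  set μ : ℕ → ℝ := fun n => Nat.rec (Wfn 0 / k) (fun n _ => (Wfn n + Wfn (n+1)) / k) n with hμ
  have hμ0 : μ 0 = Wfn 0 / k := rfl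
  have hμs : ∀ n, μ (n+1) = (Wfn n + Wfn (n+1)) / k := fun n => rfl
  have hμpos : ∀ n, 0 < μ n := by
    intro n
    cases n with
    | zero => rw [hμ0]; exact div_pos (Wfn_pos 0) hk0
    | succ n => rw [hμs]; exact div_pos (add_pos (Wfn_pos n) (Wfn_pos (n+1))) hk0
  have hμne : ∀ n, μ n ≠ 0 := fun n => ne_of_gt (hμpos n)
  have hsummμ : Summable μ := by
    rw [← summable_nat_add_iff 1]
    have : Summable (fun n => (Wfn n + Wfn (n+1)) / k) :=
      (summable_Wfn.add ((summable_nat_add_iff 1).2 summable_Wfn)).div_const k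
    exact this.congr (fun n => (hμs n).symm)
  refine ⟨fun n => Wfn n / μ n, fun n => Wfn n / μ (n+1), μ, ?_, ?_, hμpos, ?_, ?_, ?_, hsummμ, ?_⟩
  · exact fun n => div_pos (Wfn_pos n) (hμpos n)
  · exact fun n => div_pos (Wfn_pos n) (hμpos (n+1))
  · intro n
    show Wfn n / μ n * μ n = Wfn n / μ (n+1) * μ (n+1)
    rw [div_mul_cancel₀ _ (hμne n), div_mul_cancel₀ _ (hμne (n+1))]
  · show Wfn 0 / μ 0 = (k:ℝ)
    rw [hμ0, div_div_eq_mul_div, mul_comm, mul_div_assoc,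
      div_self (ne_of_gt (Wfn_pos 0)), mul_one]
  · intro n
    show Wfn n / μ (n+1) + Wfn (n+1) / μ (n+1) = (k:ℝ)
    rw [← add_div, hμs n, div_div_eq_mul_div, mul_comm, mul_div_assoc,
      div_self (ne_of_gt (add_pos (Wfn_pos n) (Wfn_pos (n+1)))), mul_one]
  · -- expansion fails
    have hshift : ∑' n, Wfn (n+1) = 1 - Wfn 0 := by
      have h := Summable.tsum_eq_zero_add summable_Wfn
      rw [tsum_Wfn] at h
      linarith
    have htot : ∑' n, μ n = 2 / k := by
      rw [Summable.tsum_eq_zero_add hsummμ, hμ0]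
      have h1 : ∑' n, μ (n+1) = (∑' n, (Wfn n + Wfn (n+1))) / k := by
        rw [← tsum_div_const]
      have h2 : ∑' n, (Wfn n + Wfn (n+1)) = 1 + (1 - Wfn 0) := by
        rw [Summable.tsum_add summable_Wfn ((summable_nat_add_iff 1).2 summable_Wfn), tsum_Wfn, hshift]
      rw [h1, h2]
      field_simp
      ring
    intro ε hε
    set p : ℕ := ⌈(4*(k:ℝ))/ε⌉₊ + 1 with hp
    have hp1 : 1 ≤ p := Nat.le_add_left 1 _
    have hpR : 4*(k:ℝ) < ε * ((p:ℝ)+1) := by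
      have h1 : (4*(k:ℝ))/ε ≤ (⌈(4*(k:ℝ))/ε⌉₊ : ℝ) := Nat.le_ceil _
      have h2 : ((⌈(4*(k:ℝ))/ε⌉₊ : ℝ)) + 2 = (p:ℝ) + 1 := by push_cast [hp]; ring
      have h3 : (4*(k:ℝ))/ε < (p:ℝ)+1 := by linarith
      calc 4*(k:ℝ) = ((4*(k:ℝ))/ε) * ε := by field_simp
        _ < ((p:ℝ)+1) * ε := mul_lt_mul_of_pos_right h3 hε
        _ = ε * ((p:ℝ)+1) := by ring
    refine ⟨Finset.Icc (p+1) (2*p+2), ⟨p+1, Finset.mem_Icc.mpr (by omega)⟩, ?_, ?_⟩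
    · -- at most half the volume
      have hsub : ∑ n ∈ insert 0 (insert 1 (Finset.Icc (p+1) (2*p+2))), μ n ≤ ∑' n, μ n :=
        Summable.sum_le_tsum _ (fun n _ => (hμpos n).le) hsummμ
      have h0 : (0:ℕ) ∉ insert 1 (Finset.Icc (p+1) (2*p+2)) := by
        simp only [Finset.mem_insert, Finset.mem_Icc]; omega
      have h1 : (1:ℕ) ∉ Finset.Icc (p+1) (2*p+2) := by
        simp only [Finset.mem_Icc]; omega
      rw [Finset.sum_insert h0, Finset.sum_insert h1] at hsub
      have hW0 : Wfn 0 = 1/2 := by unfold Wfn; norm_num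
      have hW1 : Wfn 1 = 1/6 := by unfold Wfn; norm_num
      have hμ0v : μ 0 = 1/(2*k) := by rw [hμ0, hW0]; ring
      have hμ1v : μ 1 = (7/6)/k - 1/(2*k) := by
        have h := hμs 0
        norm_num at h
        rw [h, hW0, hW1]; ring
      rw [htot] at hsub ⊢
      rw [hμ0v, hμ1v] at hsub
      have hkey : (2/(k:ℝ))/2 ≤ 1/(2*k) + ((7/6)/k - 1/(2*k)) := by
        have h : (1:ℝ)/k ≤ (7/6)/k := by
          rw [div_le_div_iff₀ hk0 hk0]; nlinarith
        calc (2/(k:ℝ))/2 = 1/k := by ring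
          _ ≤ (7/6)/k := h
          _ = 1/(2*k) + ((7/6)/k - 1/(2*k)) := by ring
      linarith
    · -- small boundary
      set S := Finset.Icc (p+1) (2*p+2) with hS
      have hbd : (∑' n : ℕ, if (n ∈ S ∧ n + 1 ∉ S) ∨ (n ∉ S ∧ n + 1 ∈ S)
          then (Wfn n / μ n) * μ n else 0) = Wfn p + Wfn (2*p+2) := by
        have hwm : ∀ n, (Wfn n / μ n) * μ n = Wfn n :=
          fun n => div_mul_cancel₀ _ (hμne n)
        rw [tsum_eq_sum (s := {p, 2*p+2}) ?_]
        · rw [Finset.sum_pair (by omega : p ≠ 2*p+2)]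
          have c1 : (p ∈ S ∧ p + 1 ∉ S) ∨ (p ∉ S ∧ p + 1 ∈ S) := by
            simp only [hS, Finset.mem_Icc]; omega
          have c2 : (2*p+2 ∈ S ∧ 2*p+2 + 1 ∉ S) ∨ (2*p+2 ∉ S ∧ 2*p+2 + 1 ∈ S) := by
            simp only [hS, Finset.mem_Icc]; omega
          rw [if_pos c1, if_pos c2, hwm, hwm]
        · intro n hn
          simp only [Finset.mem_insert, Finset.mem_singleton] at hn
          push_neg at hn
          rw [if_neg]
          simp only [hS, Finset.mem_Icc]
          omega
      rw [hbd]
      have step : ∀ n ∈ S, Wfn n / k ≤ μ n := by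
        intro n hn
        simp only [hS, Finset.mem_Icc] at hn
        obtain ⟨m, rfl⟩ : ∃ m, n = m + 1 := ⟨n - 1, by omega⟩
        rw [hμs]
        rw [div_le_div_iff₀ hk0 hk0]
        nlinarith [Wfn_pos m, mul_pos (Wfn_pos m) hk0]
      have hsumW : ∑ n ∈ S, Wfn n = 1/((p:ℝ)+2) - 1/(2*(p:ℝ)+4) := by
        rw [hS, sum_Icc_Wfn (p+1) (2*p+2) (by omega)]
        push_cast
        ring
      have hlb : (1:ℝ)/(2*k*((p:ℝ)+2)) ≤ ∑ n ∈ S, μ n := by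
        calc (1:ℝ)/(2*k*((p:ℝ)+2)) = (1/((p:ℝ)+2) - 1/(2*(p:ℝ)+4))/k := by
              have hppos : (0:ℝ) < (p:ℝ)+2 := by positivity
              field_simp
              ring
          _ = ∑ n ∈ S, Wfn n / k := by rw [← Finset.sum_div, hsumW]
          _ ≤ ∑ n ∈ S, μ n := Finset.sum_le_sum step
      have hP1 : (0:ℝ) < (p:ℝ)+1 := by positivity
      have hP2 : (0:ℝ) < (p:ℝ)+2 := by positivity
      have hW1 : Wfn (2*p+2) ≤ Wfn p := by
        unfold Wfn
        apply one_div_le_one_div_of_le (by positivity)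
        push_cast
        nlinarith [Nat.cast_nonneg (α := ℝ) p]
      have hfin : 2 * Wfn p < ε * (1/(2*k*((p:ℝ)+2))) := by
        unfold Wfn
        rw [mul_one_div, mul_one_div, div_lt_div_iff₀ (by positivity) (by positivity)]
        nlinarith [mul_lt_mul_of_pos_right hpR hP2]
      calc Wfn p + Wfn (2*p+2) ≤ 2 * Wfn p := by linarith
        _ < ε * (1/(2*k*((p:ℝ)+2))) := hfin
        _ ≤ ε * ∑ n ∈ S, μ n := mul_le_mul_of_nonneg_left hlb hε.le
end

section
/- For every integer k ≥ 3 there exist functions a, b, μ : ℕ → ℝ with a(n), b(n), μ(n) > 0 for all n, a(n)·μ(n) = b(n)·μ(n+1) for all n, a(0) = k and b(n) + a(n+1) = k for all n, and ∑_n μ(n) < ∞, such that λ = 0, where λ = inf{ Re ⟨Δf, f⟩ : f : ℕ → ℂ with ∑_n f(n)·μ(n) = 0 and ∑_n |f(n)|²·μ(n) = 1 }, ⟨f, g⟩ = ∑_n f(n)·conj(g(n))·μ(n), Δf(0) = f(0) − (1/k)·a(0)·f(1), and Δf(n) = f(n) − (1/k)·(b(n−1)·f(n−1) + a(n)·f(n+1))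 for n ≥ 1. In other words, there exists a k-regular diagram of finite volume whose Laplace operator has 0 as the bottom of its spectrum restricted to the mean-zero subspace. -/
/-- The Laplace operator of a `k`-regular edge-indexed ray:
`Δf(0) = f(0) − (1/k)·a(0)·f(1)` and
`Δf(n+1) = f(n+1) − (1/k)·(b(n)·f(n) + a(n+1)·f(n+2))`. -/
noncomputable def rayLaplacian (k : ℕ) (a b : ℕ → ℝ) (f : ℕ → ℂ) : ℕ → ℂ
  | 0 => f 0 - (1 / (k : ℂ)) * ((a 0 : ℝ) * f 1)
  | n + 1 => f (n + 1) - (1 / (k : ℂ)) * (((b n : ℝ) : ℂ) * f n + ((a (n + 1) : ℝ) : ℂ) * f (n + 2))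

namespace Stmt6Aux

noncomputable def iw (n : ℕ) : ℝ := 1 / (((n:ℝ) + 2) * ((n:ℝ) + 3) * ((n:ℝ) + 4))

noncomputable def mu : ℕ → ℝ
  | 0 => 1 / 24
  | n + 1 => iw n + iw (n + 1)

noncomputable def aa (k : ℕ) (n : ℕ) : ℝ := (k : ℝ) * iw n / mu n
noncomputable def bb (k : ℕ) (n : ℕ) : ℝ := (k : ℝ) * iw n / mu (n + 1)

lemma iw_pos (n : ℕ) : 0 < iw n := by unfold iw; positivity

lemma mu_pos (n : ℕ) : 0 < mu n := by
  cases n with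
  | zero => norm_num [mu]
  | succ m => exact add_pos (iw_pos m) (iw_pos (m+1))

lemma mu_zero : mu 0 = 1/24 := rfl
lemma iw_zero : iw 0 = 1/24 := by norm_num [iw]
lemma mu_succ (n : ℕ) : mu (n+1) = iw n + iw (n+1) := rfl

lemma aa_pos {k : ℕ} (hk : 3 ≤ k) (n : ℕ) : 0 < aa k n := by
  have hkp : (0:ℝ) < k := by exact_mod_cast Nat.lt_of_lt_of_le (by norm_num) hk
  exact div_pos (mul_pos hkp (iw_pos n)) (mu_pos n)

lemma bb_pos {k : ℕ} (hk : 3 ≤ k) (n : ℕ) : 0 < bb k n := by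
  have hkp : (0:ℝ) < k := by exact_mod_cast Nat.lt_of_lt_of_le (by norm_num) hk
  exact div_pos (mul_pos hkp (iw_pos n)) (mu_pos (n+1))

lemma compat (k : ℕ) (n : ℕ) : aa k n * mu n = bb k n * mu (n+1) := by
  rw [aa, bb, div_mul_cancel₀ _ (mu_pos n).ne', div_mul_cancel₀ _ (mu_pos (n+1)).ne']

lemma aa_zero (k : ℕ) : aa k 0 = k := by
  rw [aa, mu_zero, iw_zero]; norm_num

lemma reg (k : ℕ) (n : ℕ) : bb k n + aa k (n+1) = k := by
  rw [aa, bb, ← add_div, mu_succ, ← mul_add, ← mu_succ,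
    mul_div_assoc, div_self (mu_pos (n+1)).ne', mul_one]

lemma aamu (k : ℕ) (n : ℕ) : aa k n * mu n = k * iw n :=
  div_mul_cancel₀ _ (mu_pos n).ne'

lemma bbmu (k : ℕ) (n : ℕ) : bb k n * mu (n+1) = k * iw n :=
  div_mul_cancel₀ _ (mu_pos (n+1)).ne'

lemma mu_le_sq (n : ℕ) : mu n ≤ 1 / ((n:ℝ)+1)^2 := by
  cases n with
  | zero => norm_num [mu]
  | succ m =>
    rw [mu_succ, iw, iw]
    push_cast
    rw [div_add_div _ _ (by positivity) (by positivity), div_le_div_iff₀ (by positivity) (by positivity)]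
    have hm : (0:ℝ) ≤ (m:ℝ) := Nat.cast_nonneg m
    nlinarith [pow_nonneg hm 6, pow_nonneg hm 5, pow_nonneg hm 4, pow_nonneg hm 3, sq_nonneg (m:ℝ), hm]

lemma summable_mu : Summable mu := by
  have h : Summable (fun n : ℕ => 1 / ((n:ℝ)+1)^2) := by
    have := Real.summable_one_div_nat_pow.2 (le_refl 2)
    simpa using (summable_nat_add_iff 1).2 this
  exact h.of_nonneg_of_le (fun n => (mu_pos n).le) mu_le_sq

lemma iw_le_mu (n : ℕ) : iw n ≤ mu n := by
  cases n with
  | zero => rw [iw_zero, mu_zero]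
  | succ m => rw [mu_succ]; nlinarith [iw_pos m, iw_pos (m+1)]

lemma iw_le_mu_succ (n : ℕ) : iw n ≤ mu (n+1) := by
  rw [mu_succ]; nlinarith [iw_pos n, iw_pos (n+1)]


noncomputable def uu (f : ℕ → ℂ) (n : ℕ) : ℝ :=
  iw n * (‖f n‖^2 - (f (n+1) * (starRingEnd ℂ) (f n)).re)

noncomputable def vv (f : ℕ → ℂ) : ℕ → ℝ
  | 0 => 0
  | n+1 => iw n * (‖f (n+1)‖^2 - (f (n+1) * (starRingEnd ℂ) (f n)).re)

lemma reHelp (r : ℝ) (x y : ℂ) :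
    ((r:ℂ) * ((x - y) * (starRingEnd ℂ) x)).re = r * (‖x‖^2 - (y * (starRingEnd ℂ) x).re) := by
  rw [Complex.re_ofReal_mul, sub_mul, Complex.sub_re, Complex.mul_conj]
  norm_num [Complex.sq_norm]

lemma conj_swap_re (x y : ℂ) : (x * (starRingEnd ℂ) y).re = (y * (starRingEnd ℂ) x).re := by
  rw [← Complex.conj_re (x * (starRingEnd ℂ) y)]
  simp [mul_comm]

section Key
variable {k : ℕ} (hk : 3 ≤ k) (f : ℕ → ℂ)

lemma kC_ne (hk : 3 ≤ k) : (k:ℂ) ≠ 0 := Nat.cast_ne_zero.2 (by omega)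

lemma g_zero (hk : 3 ≤ k) :
    rayLaplacian k (aa k) (bb k) f 0 * (starRingEnd ℂ) (f 0) * ((mu 0 : ℝ) : ℂ)
      = (iw 0 : ℂ) * ((f 0 - f 1) * (starRingEnd ℂ) (f 0)) := by
  have hkc : (k:ℂ) ≠ 0 := kC_ne hk
  show (f 0 - (1 / (k : ℂ)) * ((aa k 0 : ℝ) * f 1)) * (starRingEnd ℂ) (f 0) * ((mu 0 : ℝ) : ℂ) = _
  rw [aa_zero, mu_zero, iw_zero]
  push_cast
  field_simp

lemma g_succ (hk : 3 ≤ k) (n : ℕ) :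
    rayLaplacian k (aa k) (bb k) f (n+1) * (starRingEnd ℂ) (f (n+1)) * ((mu (n+1) : ℝ) : ℂ)
      = (iw (n+1) : ℂ) * ((f (n+1) - f (n+2)) * (starRingEnd ℂ) (f (n+1)))
        + (iw n : ℂ) * ((f (n+1) - f n) * (starRingEnd ℂ) (f (n+1))) := by
  have hkc : (k:ℂ) ≠ 0 := kC_ne hk
  have hmuc : ((mu (n+1) : ℝ) : ℂ) ≠ 0 := by
    exact_mod_cast Complex.ofReal_ne_zero.2 (mu_pos (n+1)).ne'
  have ha : ((aa k (n+1) : ℝ) : ℂ) * (mu (n+1) : ℝ) = (k : ℂ) * (iw (n+1) : ℝ) := by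
    exact_mod_cast congrArg (fun r : ℝ => (r:ℂ)) (aamu k (n+1))
  have hb : ((bb k n : ℝ) : ℂ) * (mu (n+1) : ℝ) = (k : ℂ) * (iw n : ℝ) := by
    exact_mod_cast congrArg (fun r : ℝ => (r:ℂ)) (bbmu k n)
  show (f (n+1) - (1 / (k : ℂ)) * (((bb k n : ℝ) : ℂ) * f n + ((aa k (n+1) : ℝ) : ℂ) * f (n+2)))
      * (starRingEnd ℂ) (f (n+1)) * ((mu (n+1) : ℝ) : ℂ) = _
  have hmu2 : ((mu (n+1) : ℝ) : ℂ) = (iw n : ℝ) + (iw (n+1) : ℝ) := by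
    exact_mod_cast congrArg (fun r : ℝ => (r:ℂ)) (mu_succ n)
  have hbb : ((bb k n : ℝ) : ℂ) = (k : ℂ) * ((iw n : ℝ) : ℂ) / ((mu (n+1) : ℝ) : ℂ) :=
    (eq_div_iff hmuc).2 hb
  have haa : ((aa k (n+1) : ℝ) : ℂ) = (k : ℂ) * ((iw (n+1) : ℝ) : ℂ) / ((mu (n+1) : ℝ) : ℂ) :=
    (eq_div_iff hmuc).2 ha
  have hiw : ((iw n : ℝ) : ℂ) + ((iw (n+1) : ℝ) : ℂ) ≠ 0 := by
    rw [← Complex.ofReal_add]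
    exact Complex.ofReal_ne_zero.2 (by rw [← mu_succ]; exact (mu_pos (n+1)).ne')
  rw [hbb, haa, hmu2]
  field_simp [hiw]
  ring

lemma abs_re_le_norm (z : ℂ) : |z.re| ≤ ‖z‖ := by
  exact Complex.abs_re_le_norm z

lemma norm_sq_eq (z : ℂ) : ‖z‖^2 = Complex.normSq z := by
  rw [Complex.sq_norm]

lemma term_bound (r m1 m2 : ℝ) (x y : ℂ) (hr : 0 ≤ r) (h1 : r ≤ m1) (h2 : r ≤ m2) :
    ‖(r:ℂ) * ((x - y) * (starRingEnd ℂ) x)‖ ≤ 2*(‖x‖^2 * m1) + ‖y‖^2 * m2 := by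
  rw [norm_mul, norm_mul, Complex.norm_real, Real.norm_eq_abs, RCLike.norm_conj, abs_of_nonneg hr]
  have h3 : ‖x - y‖ * ‖x‖ ≤ (‖x‖ + ‖y‖) * ‖x‖ :=
    mul_le_mul_of_nonneg_right (norm_sub_le x y) (norm_nonneg x)
  have e1 : r * (‖x-y‖*‖x‖) ≤ r * ((‖x‖+‖y‖)*‖x‖) := mul_le_mul_of_nonneg_left h3 hr
  have e2 : (‖x‖+‖y‖)*‖x‖ ≤ (3/2)*‖x‖^2 + (1/2)*‖y‖^2 := by nlinarith [sq_nonneg (‖x‖-‖y‖)]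
  have e3 : r * ((‖x‖+‖y‖)*‖x‖) ≤ r * ((3/2)*‖x‖^2 + (1/2)*‖y‖^2) := mul_le_mul_of_nonneg_left e2 hr
  have e4 : r * ‖x‖^2 ≤ m1 * ‖x‖^2 := mul_le_mul_of_nonneg_right h1 (sq_nonneg _)
  have e5 : r * ‖y‖^2 ≤ m2 * ‖y‖^2 := mul_le_mul_of_nonneg_right h2 (sq_nonneg _)
  have hm1 : 0 ≤ m1 * ‖x‖^2 := mul_nonneg (hr.trans h1) (sq_nonneg _)
  have hm2 : 0 ≤ m2 * ‖y‖^2 := mul_nonneg (hr.trans h2) (sq_nonneg _)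
  nlinarith [e1, e3, e4, e5, hm1, hm2]

lemma g_re (hk : 3 ≤ k) (n : ℕ) :
    (rayLaplacian k (aa k) (bb k) f n * (starRingEnd ℂ) (f n) * ((mu n : ℝ) : ℂ)).re
      = uu f n + vv f n := by
  cases n with
  | zero => rw [g_zero f hk, reHelp]; simp [uu, vv]
  | succ n =>
    rw [g_succ f hk n, Complex.add_re, reHelp, reHelp,
      conj_swap_re (f n) (f (n+1))]
    simp only [uu, vv]

lemma uu_bound (n : ℕ) :
    |uu f n| ≤ 2*(‖f n‖^2 * mu n) + ‖f (n+1)‖^2 * mu (n+1) := by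
  have h := term_bound (iw n) (mu n) (mu (n+1)) (f n) (f (n+1))
    (iw_pos n).le (iw_le_mu n) (iw_le_mu_succ n)
  refine le_trans ?_ h
  rw [uu, ← reHelp]
  exact abs_re_le_norm _

lemma vv_bound (n : ℕ) :
    |vv f (n+1)| ≤ 2*(‖f (n+1)‖^2 * mu (n+1)) + ‖f n‖^2 * mu n := by
  have h := term_bound (iw n) (mu (n+1)) (mu n) (f (n+1)) (f n)
    (iw_pos n).le (iw_le_mu_succ n) (iw_le_mu n)
  refine le_trans ?_ h
  have : vv f (n+1) = ((iw n : ℂ) * ((f (n+1) - f n) * (starRingEnd ℂ) (f (n+1)))).re := by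
    rw [reHelp, conj_swap_re (f n) (f (n+1))]; rfl
  rw [this]
  exact abs_re_le_norm _

section Summables
variable (hf : Summable fun n => ‖f n‖^2 * mu n)
include hf

lemma hD1 : Summable (fun n => ‖f (n+1)‖^2 * mu (n+1)) :=
  (summable_nat_add_iff 1).2 hf

lemma hD2 : Summable (fun n => ‖f (n+2)‖^2 * mu (n+2)) :=
  (summable_nat_add_iff 2).2 hf

lemma summable_uu : Summable (uu f) := by
  refine Summable.of_abs (Summable.of_nonneg_of_le (fun n => abs_nonneg _) (uu_bound f) ?_)
  exact (hf.mul_left 2).add (hD1 f hf)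

lemma summable_vv_succ : Summable (fun n => vv f (n+1)) := by
  refine Summable.of_abs (Summable.of_nonneg_of_le (fun n => abs_nonneg _) (vv_bound f) ?_)
  exact ((hD1 f hf).mul_left 2).add hf

lemma summable_vv : Summable (vv f) :=
  (summable_nat_add_iff 1).1 (summable_vv_succ f hf)

lemma summable_g (hk : 3 ≤ k) :
    Summable (fun n => rayLaplacian k (aa k) (bb k) f n * (starRingEnd ℂ) (f n) * ((mu n : ℝ) : ℂ)) := by
  apply (summable_nat_add_iff 1).1
  apply Summable.of_norm_bounded
    (g := fun n => (2*(‖f (n+1)‖^2 * mu (n+1)) + ‖f (n+2)‖^2 * mu (n+2))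
      + (2*(‖f (n+1)‖^2 * mu (n+1)) + ‖f n‖^2 * mu n))
  · exact (((hD1 f hf).mul_left 2).add (hD2 f hf)).add (((hD1 f hf).mul_left 2).add hf)
  · intro n
    rw [g_succ f hk n]
    refine (norm_add_le _ _).trans (add_le_add ?_ ?_)
    · exact term_bound (iw (n+1)) (mu (n+1)) (mu (n+2)) (f (n+1)) (f (n+2))
        (iw_pos (n+1)).le (iw_le_mu (n+1)) (iw_le_mu_succ (n+1))
    · exact term_bound (iw n) (mu (n+1)) (mu n) (f (n+1)) (f n)
        (iw_pos n).le (iw_le_mu_succ n) (iw_le_mu n)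

omit hf in
lemma uv_eq (n : ℕ) : uu f n + vv f (n+1) = iw n * ‖f (n+1) - f n‖^2 := by
  simp only [uu, vv, norm_sq_eq]
  rw [Complex.normSq_sub]
  ring

lemma summable_energy : Summable (fun n => iw n * ‖f (n+1) - f n‖^2) :=
  Summable.congr ((summable_uu f hf).add (summable_vv_succ f hf)) (uv_eq f)

lemma key (hk : 3 ≤ k) :
    (∑' n, rayLaplacian k (aa k) (bb k) f n * (starRingEnd ℂ) (f n) * ((mu n : ℝ) : ℂ)).re
      = ∑' n, iw n * ‖f (n+1) - f n‖^2 := by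
  have hg := summable_g f hf hk
  have h1 := Complex.reCLM.map_tsum hg
  simp only [Complex.reCLM_apply] at h1
  rw [h1, tsum_congr (g_re f hk)]
  rw [Summable.tsum_add (summable_uu f hf) (summable_vv f hf)]
  rw [Summable.tsum_eq_zero_add (summable_vv f hf)]
  show _ + (vv f 0 + _) = _
  rw [show vv f 0 = 0 from rfl, zero_add,
    ← Summable.tsum_add (summable_uu f hf) (summable_vv_succ f hf)]
  exact tsum_congr (uv_eq f)

end Summables
end Key

/-! ### Estimates -/

lemma tele_sum (m : ℕ) :
    ∑ n ∈ Finset.range m, ((1:ℝ)/((n:ℝ)+2) - 1/((n:ℝ)+3)) = 1/2 - 1/((m:ℝ)+2) := by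
  have h := Finset.sum_range_sub' (f := fun i : ℕ => (1:ℝ)/((i:ℝ)+2)) m
  have h2 : ∀ n : ℕ, (1:ℝ)/((n:ℝ)+2) - 1/(((n+1:ℕ):ℝ)+2) = 1/((n:ℝ)+2) - 1/((n:ℝ)+3) := by
    intro n; push_cast; ring
  rw [Finset.sum_congr rfl (fun n _ => h2 n)] at h
  rw [h]; norm_num

lemma iw_le_tele (n : ℕ) : iw n ≤ 1/((n:ℝ)+2) - 1/((n:ℝ)+3) := by
  rw [iw, div_sub_div _ _ (by positivity) (by positivity)]
  rw [div_le_div_iff₀ (by positivity) (by positivity)]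
  have hn : (0:ℝ) ≤ (n:ℝ) := Nat.cast_nonneg n
  nlinarith [hn, sq_nonneg ((n:ℝ))]

lemma sum_iw_le (m : ℕ) : ∑ n ∈ Finset.range m, iw n ≤ 1/2 := by
  calc ∑ n ∈ Finset.range m, iw n
      ≤ ∑ n ∈ Finset.range m, ((1:ℝ)/((n:ℝ)+2) - 1/((n:ℝ)+3)) :=
        Finset.sum_le_sum (fun n _ => iw_le_tele n)
    _ = 1/2 - 1/((m:ℝ)+2) := tele_sum m
    _ ≤ 1/2 := by
        have : (0:ℝ) < (m:ℝ)+2 := by positivity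
        have := one_div_pos.2 this
        linarith

lemma nmu_le (n : ℕ) : (n:ℝ) * mu n ≤ 2*(1/((n:ℝ)+2) - 1/((n:ℝ)+3)) := by
  cases n with
  | zero => norm_num [mu]
  | succ m =>
    rw [mu_succ, iw, iw]
    have hm : (0:ℝ) ≤ (m:ℝ) := Nat.cast_nonneg m
    push_cast
    rw [div_add_div _ _ (by positivity) (by positivity),
      div_sub_div _ _ (by positivity) (by positivity)]
    rw [← mul_div_assoc, ← mul_div_assoc]
    rw [div_le_div_iff₀ (by positivity) (by positivity)]
    ring_nf
    nlinarith [pow_nonneg hm 6, pow_nonneg hm 5, pow_nonneg hm 4, pow_nonneg hm 3, sq_nonneg (m:ℝ), hm]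

lemma summable_nmu : Summable (fun n : ℕ => (n:ℝ) * mu n) := by
  have h : Summable (fun n : ℕ => 2 / ((n:ℝ)+1)^2) := by
    have := Real.summable_one_div_nat_pow.2 (le_refl 2)
    simpa [div_eq_mul_inv] using (((summable_nat_add_iff 1).2 this).mul_left 2)
  refine h.of_nonneg_of_le (fun n => mul_nonneg (Nat.cast_nonneg n) (mu_pos n).le) (fun n => ?_)
  cases n with
  | zero => norm_num [mu]
  | succ m =>
    rw [mu_succ, iw, iw]
    have hm : (0:ℝ) ≤ (m:ℝ) := Nat.cast_nonneg m
    push_cast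
    rw [div_add_div _ _ (by positivity) (by positivity)]
    rw [mul_comm, div_mul_eq_mul_div, div_le_div_iff₀ (by positivity) (by positivity)]
    ring_nf
    nlinarith [pow_nonneg hm 6, pow_nonneg hm 5, pow_nonneg hm 4, pow_nonneg hm 3, sq_nonneg (m:ℝ), hm]

lemma tsum_nmu_le : ∑' n : ℕ, (n:ℝ) * mu n ≤ 1 := by
  refine Summable.tsum_le_of_sum_le summable_nmu (fun s => ?_)
  obtain ⟨N, hN⟩ := s.exists_nat_subset_range
  calc ∑ n ∈ s, (n:ℝ) * mu n
      ≤ ∑ n ∈ Finset.range N, (n:ℝ) * mu n :=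
        Finset.sum_le_sum_of_subset_of_nonneg hN
          (fun n _ _ => mul_nonneg (Nat.cast_nonneg n) (mu_pos n).le)
    _ ≤ ∑ n ∈ Finset.range N, 2*(1/((n:ℝ)+2) - 1/((n:ℝ)+3)) :=
        Finset.sum_le_sum (fun n _ => nmu_le n)
    _ = 2 * (1/2 - 1/((N:ℝ)+2)) := by rw [← Finset.mul_sum, tele_sum]
    _ ≤ 1 := by
        have : (0:ℝ) < (N:ℝ)+2 := by positivity
        have := one_div_pos.2 this
        linarith

lemma harm (j : ℕ) : (j:ℝ)/3 ≤ ∑ n ∈ Finset.range (10 * 2^j), (1:ℝ)/((n:ℝ)+7) := by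
  induction j with
  | zero =>
    simp only [Nat.cast_zero, zero_div]
    exact Finset.sum_nonneg (fun n _ => by positivity)
  | succ j ih =>
    have h5 : 10 * 2^(j+1) = 10*2^j + 10*2^j := by ring
    rw [h5, Finset.sum_range_add]
    have hN : (10:ℝ) ≤ ((10*2^j : ℕ) : ℝ) := by
      have : (10:ℕ) ≤ 10*2^j := Nat.le_mul_of_pos_right 10 (Nat.pow_pos (by norm_num))
      exact_mod_cast this
    have hblock : (1:ℝ)/3 ≤ ∑ i ∈ Finset.range (10*2^j), (1:ℝ)/(((10*2^j + i : ℕ):ℝ)+7) := by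
      set N := 10*2^j with hNdef
      have hterm : ∀ i ∈ Finset.range N, (1:ℝ)/(2*((N:ℕ):ℝ)+6) ≤ 1/(((N + i : ℕ):ℝ)+7) := by
        intro i hi
        have hi' : (i:ℝ) ≤ (N:ℝ) - 1 := by
          have : i + 1 ≤ N := Finset.mem_range.1 hi
          have := (Nat.cast_le (α := ℝ)).2 this
          push_cast at this ⊢; linarith
        apply one_div_le_one_div_of_le (by push_cast; linarith)
        push_cast
        linarith
      have hcard := Finset.card_nsmul_le_sum (Finset.range N) _ _ hterm
      rw [Finset.card_range] at hcard
      rw [nsmul_eq_mul] at hcard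
      refine le_trans ?_ hcard
      rw [mul_one_div, le_div_iff₀ (by linarith)]
      linarith
    push_cast at ih hblock ⊢
    linarith

lemma sq_mu_ge (m : ℕ) : (2/125) * (1/((m:ℝ)+7)) ≤ ((m:ℝ)+1)^2 * mu (m+1) := by
  have hm : (0:ℝ) ≤ (m:ℝ) := Nat.cast_nonneg m
  have h1 : (2/125) * (1/((m:ℝ)+7)) ≤ ((m:ℝ)+1)^2 * iw m := by
    rw [iw, mul_one_div, mul_one_div, div_le_div_iff₀ (by positivity) (by positivity)]
    nlinarith [pow_nonneg hm 3, sq_nonneg (m:ℝ), hm]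
  refine h1.trans (mul_le_mul_of_nonneg_left ?_ (sq_nonneg _))
  rw [mu_succ]
  linarith [iw_pos (m+1)]

def SS (k : ℕ) : Set ℝ :=
  { r : ℝ | ∃ f : ℕ → ℂ,
      (∑' n, f n * ((mu n : ℝ) : ℂ)) = 0 ∧
      (∑' n, ‖f n‖ ^ 2 * mu n) = 1 ∧
      r = (∑' n, rayLaplacian k (aa k) (bb k) f n * (starRingEnd ℂ) (f n) * ((mu n : ℝ) : ℂ)).re }

lemma SS_nonneg {k : ℕ} (hk : 3 ≤ k) : ∀ r ∈ SS k, 0 ≤ r := by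
  rintro r ⟨f, -, h2, h3⟩
  have hf : Summable (fun n => ‖f n‖^2 * mu n) := by
    by_contra h
    rw [tsum_eq_zero_of_not_summable h] at h2
    norm_num at h2
  rw [h3, key f hf hk]
  exact tsum_nonneg (fun n => mul_nonneg (iw_pos n).le (sq_nonneg _))

set_option maxHeartbeats 1000000 in
lemma exists_mem_lt {k : ℕ} (hk : 3 ≤ k) {ε : ℝ} (hε : 0 < ε) : ∃ r ∈ SS k, r < ε := by
  classical
  set j : ℕ := 4700 + ⌈188/ε⌉₊ with hjdef
  set m : ℕ := 10 * 2^j with hmdef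
  have hm1 : 1 ≤ m := by
    have : (1:ℕ) ≤ 2^j := Nat.one_le_two_pow
    omega
  set F : ℕ → ℝ := fun n => ((min n m : ℕ) : ℝ) with hFdef
  have hFnonneg : ∀ n, 0 ≤ F n := fun n => Nat.cast_nonneg _
  have hFle : ∀ n, F n ≤ (n:ℝ) := fun n => by
    exact_mod_cast Nat.cast_le.2 (min_le_left n m)
  have hFlem : ∀ n, F n ≤ (m:ℝ) := fun n => by
    exact_mod_cast Nat.cast_le.2 (min_le_right n m)
  have hFsum : Summable (fun n => F n * mu n) := by
    refine (summable_mu.mul_left (m:ℝ)).of_nonneg_of_le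
      (fun n => mul_nonneg (hFnonneg n) (mu_pos n).le)
      (fun n => mul_le_mul_of_nonneg_right (hFlem n) (mu_pos n).le)
  have hF2sum : Summable (fun n => F n^2 * mu n) := by
    refine (summable_mu.mul_left ((m:ℝ)^2)).of_nonneg_of_le
      (fun n => mul_nonneg (sq_nonneg _) (mu_pos n).le)
      (fun n => mul_le_mul_of_nonneg_right ?_ (mu_pos n).le)
    exact pow_le_pow_left₀ (hFnonneg n) (hFlem n) 2
  set V := ∑' n, mu n with hVdef
  have hVlb : (1:ℝ)/24 ≤ V := by
    have := Summable.le_tsum summable_mu 0 (fun i _ => (mu_pos i).le)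
    rw [mu_zero] at this
    exact this
  have hVpos : (0:ℝ) < V := lt_of_lt_of_le (by norm_num) hVlb
  set S1 := ∑' n, F n * mu n with hS1def
  have hS1nonneg : 0 ≤ S1 :=
    tsum_nonneg (fun n => mul_nonneg (hFnonneg n) (mu_pos n).le)
  have hS1le : S1 ≤ 1 := by
    refine le_trans (Summable.tsum_le_tsum (fun n => mul_le_mul_of_nonneg_right (hFle n) (mu_pos n).le)
      hFsum summable_nmu) tsum_nmu_le
  set T2 := ∑' n, F n^2 * mu n with hT2def
  have hT2 : (2/375) * (j:ℝ) ≤ T2 := by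
    have step1 : (2/375) * (j:ℝ) = (2/125) * ((j:ℝ)/3) := by ring
    have step2 : (2/125) * ((j:ℝ)/3) ≤ (2/125) * ∑ n ∈ Finset.range m, (1:ℝ)/((n:ℝ)+7) :=
      mul_le_mul_of_nonneg_left (harm j) (by norm_num)
    have step3 : (2/125) * ∑ n ∈ Finset.range m, (1:ℝ)/((n:ℝ)+7)
        = ∑ n ∈ Finset.range m, (2/125) * ((1:ℝ)/((n:ℝ)+7)) := Finset.mul_sum _ _ _
    have step4 : ∑ n ∈ Finset.range m, (2/125) * ((1:ℝ)/((n:ℝ)+7))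
        ≤ ∑ n ∈ Finset.range m, F (n+1)^2 * mu (n+1) := by
      refine Finset.sum_le_sum (fun n hn => ?_)
      have hnm : n + 1 ≤ m := Finset.mem_range.1 hn
      have hFn : F (n+1) = (n:ℝ)+1 := by
        rw [hFdef]
        simp only [min_eq_left hnm]
        push_cast; ring
      rw [hFn]
      exact sq_mu_ge n
    have step5 : ∑ n ∈ Finset.range m, F (n+1)^2 * mu (n+1)
        ≤ ∑ n ∈ Finset.range (m+1), F n^2 * mu n := by
      rw [Finset.sum_range_succ']
      have : 0 ≤ F 0^2 * mu 0 := mul_nonneg (sq_nonneg _) (mu_pos 0).le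
      linarith
    have step6 : ∑ n ∈ Finset.range (m+1), F n^2 * mu n ≤ T2 :=
      Summable.sum_le_tsum _ (fun i _ => mul_nonneg (sq_nonneg _) (mu_pos i).le) hF2sum
    linarith
  set c := S1 / V with hcdef
  set N2 := T2 - S1^2/V with hN2def
  have hS1sq : S1^2/V ≤ 24 := by
    have h1 : S1^2 ≤ 1 := by nlinarith
    have h2 : 1/V ≤ 24 := by
      rw [div_le_iff₀ hVpos]; linarith
    calc S1^2/V = S1^2 * (1/V) := by ring
      _ ≤ 1 * 24 := mul_le_mul h1 h2 (by positivity) one_pos.le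
      _ = 24 := by norm_num
  have hjge : (4700:ℝ) + 188/ε ≤ (j:ℝ) := by
    rw [hjdef]
    push_cast
    have := Nat.le_ceil (188/ε)
    linarith
  have hT2ge : 25 + 1/ε ≤ T2 := by
    have h1 : (2/375) * ((4700:ℝ) + 188/ε) ≤ (2/375) * (j:ℝ) :=
      mul_le_mul_of_nonneg_left hjge (by norm_num)
    have h2 : (0:ℝ) < 1/ε := by positivity
    have h3 : (2/375) * ((4700:ℝ) + 188/ε) = 9400/375 + (376/375) * (1/ε) := by ring
    nlinarith
  have hN2_1 : 1 ≤ N2 := by rw [hN2def]; linarith [hε, one_div_pos.2 hε]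
  have hN2_eps : 1/ε ≤ N2 := by rw [hN2def]; linarith
  have hN2pos : (0:ℝ) < N2 := lt_of_lt_of_le one_pos hN2_1
  set NN := Real.sqrt N2 with hNNdef
  have hNNsq : NN^2 = N2 := Real.sq_sqrt hN2pos.le
  have hNNpos : (0:ℝ) < NN := Real.sqrt_pos.2 hN2pos
  set G : ℕ → ℝ := fun n => F n - c with hGdef
  have hGmu : ∀ n, G n * mu n = F n * mu n - c * mu n := fun n => by
    rw [hGdef]; ring
  have hGsum : Summable (fun n => G n * mu n) :=
    Summable.congr (hFsum.sub (summable_mu.mul_left c)) (fun n => (hGmu n).symm)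
  have hGtsum : ∑' n, G n * mu n = 0 := by
    rw [tsum_congr hGmu, Summable.tsum_sub hFsum (summable_mu.mul_left c), tsum_mul_left, ← hS1def, ← hVdef]
    rw [hcdef]
    field_simp
    ring
  have hG2mu : ∀ n, G n^2 * mu n = F n^2*mu n - (2*c)*(F n * mu n) + c^2 * mu n := fun n => by
    rw [hGdef]; ring
  have hG2sum : Summable (fun n => G n^2 * mu n) :=
    Summable.congr ((hF2sum.sub (hFsum.mul_left (2*c))).add (summable_mu.mul_left (c^2)))
      (fun n => (hG2mu n).symm)
  have hG2tsum : ∑' n, G n^2 * mu n = N2 := by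
    rw [tsum_congr hG2mu,
      Summable.tsum_add (hF2sum.sub (hFsum.mul_left (2*c))) (summable_mu.mul_left (c^2)),
      Summable.tsum_sub hF2sum (hFsum.mul_left (2*c)), tsum_mul_left, tsum_mul_left,
      ← hS1def, ← hVdef, ← hT2def, hN2def, hcdef]
    field_simp
    ring
  set f : ℕ → ℂ := fun n => ((G n / NN : ℝ) : ℂ) with hfdef
  have hfnorm : ∀ n, ‖f n‖^2 * mu n = (G n^2 * mu n)/N2 := by
    intro n
    rw [hfdef]
    rw [Complex.norm_real, Real.norm_eq_abs, sq_abs, div_pow, hNNsq]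
    ring
  have hfsum2 : Summable (fun n => ‖f n‖^2 * mu n) :=
    Summable.congr (hG2sum.div_const N2) (fun n => (hfnorm n).symm)
  have hfnorm_tsum : ∑' n, ‖f n‖^2*mu n = 1 := by
    rw [tsum_congr hfnorm, tsum_div_const, hG2tsum, div_self hN2pos.ne']
  have hmean : ∑' n, f n * ((mu n : ℝ):ℂ) = 0 := by
    have heq : ∀ n, f n * ((mu n:ℝ):ℂ) = (((G n * mu n)/NN : ℝ) : ℂ) := by
      intro n; rw [hfdef]; push_cast; ring
    rw [tsum_congr heq, ← Complex.ofReal_tsum, tsum_div_const, hGtsum]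
    norm_num
  refine ⟨_, ⟨f, hmean, hfnorm_tsum, rfl⟩, ?_⟩
  rw [key f hfsum2 hk]
  have hdf : ∀ n, iw n * ‖f (n+1) - f n‖^2
      = iw n * ((F (n+1) - F n)^2 / N2) := by
    intro n
    congr 1
    have : f (n+1) - f n = (((F (n+1) - F n)/NN : ℝ) : ℂ) := by
      simp only [hfdef, hGdef]
      push_cast
      ring
    rw [this, Complex.norm_real, Real.norm_eq_abs, sq_abs, div_pow, hNNsq]
  have hvanish : ∀ n ∉ Finset.range m, iw n * ‖f (n+1) - f n‖^2 = 0 := by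
    intro n hn
    have hnm : m ≤ n := le_of_not_gt (fun h => hn (Finset.mem_range.2 h))
    rw [hdf n]
    have : F (n+1) = F n := by
      rw [hFdef]
      simp only [min_eq_right (le_trans hnm (Nat.le_succ n)), min_eq_right hnm]
    rw [this]
    simp
  rw [tsum_eq_sum hvanish]
  have hone : ∀ n ∈ Finset.range m, iw n * ‖f (n+1) - f n‖^2 = iw n * (1/N2) := by
    intro n hn
    have hnm : n < m := Finset.mem_range.1 hn
    rw [hdf n]
    have h1 : F (n+1) = (n:ℝ)+1 := by
      rw [hFdef]; simp only [min_eq_left (by omega : n + 1 ≤ m)]; push_cast; ring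
    have h2 : F n = (n:ℝ) := by
      rw [hFdef]; simp only [min_eq_left hnm.le]
    rw [h1, h2]
    norm_num
  rw [Finset.sum_congr rfl hone]
  have hfin : ∑ n ∈ Finset.range m, iw n * (1/N2)
      = (∑ n ∈ Finset.range m, iw n) * (1/N2) := (Finset.sum_mul _ _ _).symm
  rw [hfin]
  have h1 : (∑ n ∈ Finset.range m, iw n) * (1/N2) ≤ (1/2) * (1/N2) :=
    mul_le_mul_of_nonneg_right (sum_iw_le m) (by positivity)
  have h2 : 1/N2 ≤ ε := by
    rw [div_le_iff₀ hN2pos]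
    rw [div_le_iff₀ hε] at hN2_eps
    nlinarith
  have h3 : (0:ℝ) < 1/N2 := by positivity
  nlinarith

end Stmt6Aux

theorem stmt6 (k : ℕ) (hk : 3 ≤ k) :
    ∃ a b μ : ℕ → ℝ,
      (∀ n, 0 < a n) ∧ (∀ n, 0 < b n) ∧ (∀ n, 0 < μ n) ∧
      (∀ n, a n * μ n = b n * μ (n + 1)) ∧
      a 0 = k ∧ (∀ n, b n + a (n + 1) = k) ∧
      Summable μ ∧
      sInf { r : ℝ | ∃ f : ℕ → ℂ,
          (∑' n, f n * ((μ n : ℝ) : ℂ)) = 0 ∧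
          (∑' n, ‖f n‖ ^ 2 * μ n) = 1 ∧
          r = (∑' n, rayLaplacian k a b f n * (starRingEnd ℂ) (f n) * ((μ n : ℝ) : ℂ)).re } = 0 := by
  refine ⟨Stmt6Aux.aa k, Stmt6Aux.bb k, Stmt6Aux.mu,
    Stmt6Aux.aa_pos hk, Stmt6Aux.bb_pos hk, Stmt6Aux.mu_pos,
    Stmt6Aux.compat k, Stmt6Aux.aa_zero k, Stmt6Aux.reg k, Stmt6Aux.summable_mu, ?_⟩
  show sInf (Stmt6Aux.SS k) = 0
  obtain ⟨r, hr, -⟩ := Stmt6Aux.exists_mem_lt hk one_pos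
  exact csInf_eq_of_forall_ge_of_forall_gt_exists_lt ⟨r, hr⟩
    (Stmt6Aux.SS_nonneg hk)
    (fun w hw => Stmt6Aux.exists_mem_lt hk hw)
end

section
/- Let k > 1 be a real number, let s be a positive integer, and for each j ∈ {1, …, s} let μ_j : ℕ → ℝ be positive with μ_j(l+1) ≤ μ_j(l)/k for all l, and let w_j : ℕ → ℝ satisfy w_j(l) ≥ k·μ_j(l) for all l (w_j(l) is the measure of the edge joining positions l and l+1 on the j-th ray). Let S be a finite nonempty subset of {1, …, s} × ℕ such that (j, 0) ∉ S for every j. Then ∑ w_j(l) ≥ (k − 1)·∑_{(j,l) ∈ S} μ_j(l), where the first sum runs over all pairs (j, l) such that exactly one of (j, l), (j, l+1) belongs to S. -/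
open Finset

theorem stmt9 (k : ℝ) (hk : 1 < k) (s : ℕ) (hs : 0 < s)
    (μ w : Fin s → ℕ → ℝ)
    (hμ_pos : ∀ j l, 0 < μ j l)
    (hμ_dec : ∀ j l, μ j (l + 1) ≤ μ j l / k)
    (hw : ∀ j l, k * μ j l ≤ w j l)
    (S : Finset (Fin s × ℕ)) (hS_ne : S.Nonempty)
    (hS0 : ∀ j : Fin s, (j, 0) ∉ S) :
    (k - 1) * ∑ p ∈ S, μ p.1 p.2 ≤
      ∑' p : Fin s × ℕ,
        if (p ∈ S ∧ (p.1, p.2 + 1) ∉ S) ∨ (p ∉ S ∧ (p.1, p.2 + 1) ∈ S)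
        then w p.1 p.2 else 0 := by
  classical
  have hk0 : (0:ℝ) < k := lt_trans one_pos hk
  set r : ℝ := 1 / k with hr
  have hr0 : 0 ≤ r := by positivity
  have hr1 : r < 1 := by rw [hr, div_lt_one hk0]; exact hk
  -- decay of μ
  have hdecay : ∀ (j : Fin s) (a i : ℕ), μ j (a + i) ≤ μ j a * r ^ i := by
    intro j a i
    induction i with
    | zero => simp
    | succ i ih =>
        have h1 : μ j (a + (i + 1)) ≤ μ j (a + i) / k := by
          have := hμ_dec j (a + i); simpa [Nat.add_assoc] using this
        have h2 : μ j (a + i) / k ≤ (μ j a * r ^ i) / k := by gcongr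
        calc μ j (a + (i + 1)) ≤ (μ j a * r ^ i) / k := le_trans h1 h2
          _ = μ j a * r ^ (i + 1) := by rw [pow_succ, hr]; field_simp
  -- the boundary-edge map
  set f : Fin s × ℕ → Fin s × ℕ :=
    fun p => (p.1, Nat.findGreatest (fun m => (p.1, m) ∉ S) p.2) with hf
  have hP0 : ∀ p : Fin s × ℕ, ((p.1, 0) ∉ S) := fun p => hS0 p.1
  have hf1 : ∀ p ∈ S, (f p).1 = p.1 := fun p _ => rfl
  have hf_notS : ∀ p ∈ S, f p ∉ S := by
    intro p hp
    exact Nat.findGreatest_spec (P := fun m => (p.1, m) ∉ S) (Nat.zero_le _) (hP0 p)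
  have hf_lt : ∀ p ∈ S, (f p).2 < p.2 := by
    intro p hp
    rcases lt_or_eq_of_le (Nat.findGreatest_le (P := fun m => (p.1, m) ∉ S) p.2) with h | h
    · exact h
    · exfalso
      have := Nat.findGreatest_spec (P := fun m => (p.1, m) ∉ S) (n := p.2) (Nat.zero_le _) (hP0 p)
      rw [h] at this
      exact this hp
  have hf_succS : ∀ p ∈ S, ((f p).1, (f p).2 + 1) ∈ S := by
    intro p hp
    by_contra hc
    exact Nat.findGreatest_is_greatest (Nat.lt_succ_self _) (hf_lt p hp) hc
  -- the function under the tsum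
  set g : Fin s × ℕ → ℝ :=
    fun p => if (p ∈ S ∧ (p.1, p.2 + 1) ∉ S) ∨ (p ∉ S ∧ (p.1, p.2 + 1) ∈ S)
      then w p.1 p.2 else 0 with hg
  have hw_pos : ∀ j l, 0 < w j l := fun j l =>
    lt_of_lt_of_le (mul_pos hk0 (hμ_pos j l)) (hw j l)
  have hg_nonneg : ∀ p, 0 ≤ g p := by
    intro p; rw [hg]; dsimp only
    split
    · exact (hw_pos _ _).le
    · exact le_rfl
  -- summability: g has finite support
  set T : Finset (Fin s × ℕ) := S ∪ S.image (fun p => (p.1, p.2 - 1)) with hT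
  have hg_summable : Summable g := by
    apply summable_of_ne_finset_zero (s := T)
    intro p hp
    rw [hg]; dsimp only
    rw [if_neg]
    rintro (⟨h1, _⟩ | ⟨_, h2⟩)
    · exact hp (Finset.mem_union_left _ h1)
    · refine hp (Finset.mem_union_right _ ?_)
      exact Finset.mem_image.mpr ⟨(p.1, p.2 + 1), h2, by simp⟩
  -- per-fiber bound
  have fiber_bound : ∀ e ∈ S.image f,
      (k - 1) * ∑ p ∈ S.filter (fun p => f p = e), μ p.1 p.2 ≤ w e.1 e.2 := by
    intro e he
    obtain ⟨p₀, hp₀, hfp₀⟩ := Finset.mem_image.mp he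
    have he_succS : (e.1, e.2 + 1) ∈ S := by rw [← hfp₀]; exact hf_succS p₀ hp₀
    have key : ∀ p ∈ S.filter (fun p => f p = e),
        μ p.1 p.2 ≤ μ e.1 (e.2 + 1) * r ^ (p.2 - (e.2 + 1)) := by
      intro p hp
      rw [Finset.mem_filter] at hp
      obtain ⟨hpS, hpf⟩ := hp
      have h1 : p.1 = e.1 := by rw [← hpf]
      have h2 : e.2 < p.2 := by rw [← hpf]; exact hf_lt p hpS
      have h3 : p.2 = (e.2 + 1) + (p.2 - (e.2 + 1)) := by omega
      calc μ p.1 p.2 = μ e.1 ((e.2 + 1) + (p.2 - (e.2 + 1))) := by rw [h1, ← h3]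
        _ ≤ μ e.1 (e.2 + 1) * r ^ (p.2 - (e.2 + 1)) := hdecay _ _ _
    have sum1 : ∑ p ∈ S.filter (fun p => f p = e), μ p.1 p.2 ≤
        μ e.1 (e.2 + 1) * ∑ p ∈ S.filter (fun p => f p = e), r ^ (p.2 - (e.2 + 1)) := by
      rw [Finset.mul_sum]
      exact Finset.sum_le_sum key
    have geom : ∑ p ∈ S.filter (fun p => f p = e), r ^ (p.2 - (e.2 + 1)) ≤ (1 - r)⁻¹ := by
      have hinj : ∀ p ∈ S.filter (fun p => f p = e), ∀ q ∈ S.filter (fun p => f p = e),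
          p.2 - (e.2 + 1) = q.2 - (e.2 + 1) → p = q := by
        intro p hp q hq hpq
        rw [Finset.mem_filter] at hp hq
        have h1 : p.1 = e.1 := by rw [← hp.2]
        have h2 : q.1 = e.1 := by rw [← hq.2]
        have h3 : e.2 < p.2 := by rw [← hp.2]; exact hf_lt p hp.1
        have h4 : e.2 < q.2 := by rw [← hq.2]; exact hf_lt q hq.1
        have : p.2 = q.2 := by omega
        exact Prod.ext (h1.trans h2.symm) this
      calc ∑ p ∈ S.filter (fun p => f p = e), r ^ (p.2 - (e.2 + 1))
          = ∑ i ∈ (S.filter (fun p => f p = e)).image (fun p => p.2 - (e.2 + 1)), r ^ i :=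
            (Finset.sum_image hinj).symm
        _ ≤ ∑' i : ℕ, r ^ i := by
            apply Summable.sum_le_tsum
            · intro i _; positivity
            · exact summable_geometric_of_lt_one hr0 hr1
        _ = (1 - r)⁻¹ := tsum_geometric_of_lt_one hr0 hr1
    have hmono : μ e.1 (e.2 + 1) ≤ μ e.1 e.2 / k := hμ_dec e.1 e.2
    have hwk : k * μ e.1 e.2 ≤ w e.1 e.2 := hw e.1 e.2
    have hrinv : (1 - r)⁻¹ = k / (k - 1) := by
      rw [hr]; field_simp
    have hμe1 : 0 < μ e.1 (e.2 + 1) := hμ_pos _ _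
    have hk1 : (0:ℝ) < k - 1 := by linarith
    calc (k - 1) * ∑ p ∈ S.filter (fun p => f p = e), μ p.1 p.2
        ≤ (k - 1) * (μ e.1 (e.2 + 1) * (1 - r)⁻¹) := by
          apply mul_le_mul_of_nonneg_left _ hk1.le
          calc ∑ p ∈ S.filter (fun p => f p = e), μ p.1 p.2
              ≤ μ e.1 (e.2 + 1) * ∑ p ∈ S.filter (fun p => f p = e), r ^ (p.2 - (e.2 + 1)) := sum1
            _ ≤ μ e.1 (e.2 + 1) * (1 - r)⁻¹ :=
                mul_le_mul_of_nonneg_left geom hμe1.le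
      _ = k * μ e.1 (e.2 + 1) := by rw [hrinv]; field_simp
      _ ≤ w e.1 e.2 := by
          have : k * μ e.1 (e.2 + 1) ≤ μ e.1 e.2 := by
            have := mul_le_mul_of_nonneg_left hmono hk0.le
            calc k * μ e.1 (e.2 + 1) ≤ k * (μ e.1 e.2 / k) := this
              _ = μ e.1 e.2 := by field_simp
          have hμe : 0 < μ e.1 e.2 := hμ_pos _ _
          nlinarith
  -- assemble
  have hmaps : ∀ p ∈ S, f p ∈ S.image f := fun p hp => Finset.mem_image_of_mem f hp
  have step1 : (k - 1) * ∑ p ∈ S, μ p.1 p.2 =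
      ∑ e ∈ S.image f, (k - 1) * ∑ p ∈ S.filter (fun p => f p = e), μ p.1 p.2 := by
    rw [← Finset.mul_sum, Finset.sum_fiberwise_of_maps_to hmaps]
  have step2 : ∑ e ∈ S.image f, (k - 1) * ∑ p ∈ S.filter (fun p => f p = e), μ p.1 p.2 ≤
      ∑ e ∈ S.image f, g e := by
    apply Finset.sum_le_sum
    intro e he
    refine le_trans (fiber_bound e he) ?_
    obtain ⟨p₀, hp₀, hfp₀⟩ := Finset.mem_image.mp he
    have h1 : e ∉ S := by rw [← hfp₀]; exact hf_notS p₀ hp₀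
    have h2 : (e.1, e.2 + 1) ∈ S := by rw [← hfp₀]; exact hf_succS p₀ hp₀
    rw [hg]; dsimp only
    rw [if_pos (Or.inr ⟨h1, h2⟩)]
  have step3 : ∑ e ∈ S.image f, g e ≤ tsum g :=
    Summable.sum_le_tsum _ (fun i _ => hg_nonneg i) hg_summable
  calc (k - 1) * ∑ p ∈ S, μ p.1 p.2
      = ∑ e ∈ S.image f, (k - 1) * ∑ p ∈ S.filter (fun p => f p = e), μ p.1 p.2 := step1
    _ ≤ ∑ e ∈ S.image f, g e := step2
    _ ≤ tsum g := step3
end
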